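/- Let {a_ν} be a non-negative decreasing sequence, α > 0, λ ∈ ℝ, and p ≥ 1. Then there exist constants C_1, C_2 > 0 depending only on α, λ, p such that for every positive integer n, C_1 ∑_{μ=1}^{n} μ^{-α-1} (a_μ μ^{λ+1})^p ≤ ∑_{μ=1}^{n} μ^{-α-1} (∑_{ν=1}^{μ} a_ν ν^λ)^p ≤ C_2 ∑_{μ=1}^{n} μ^{-α-1} (a_μ μ^{λ+1})^p. -/

import Mathlib

open Finset

section aux

-- concave step: (x-1)^e ≤ x^e - e x^(e-1), for x ≥ 1, 0 ≤ e ≤ 1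
lemma hl_step_le {x e : ℝ} (hx : 1 ≤ x) (he0 : 0 ≤ e) (he1 : e ≤ 1) :
    (x - 1) ^ e ≤ x ^ e - e * x ^ (e - 1) := by
  have hx0 : (0:ℝ) < x := lt_of_lt_of_le one_pos hx
  have h1x : 1 / x ≤ 1 := by rw [div_le_one hx0]; exact hx
  have hb : (1 + (-1 / x)) ^ e ≤ 1 + e * (-1 / x) :=
    rpow_one_add_le_one_add_mul_self (by rw [neg_div]; linarith) he0 he1
  have hpos : (0:ℝ) ≤ 1 + (-1/x) := by rw [neg_div]; linarith
  have hmul := mul_le_mul_of_nonneg_right hb (Real.rpow_nonneg hx0.le e)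
  rw [← Real.mul_rpow hpos hx0.le] at hmul
  have h2 : (1 + -1 / x) * x = x - 1 := by field_simp; ring
  rw [h2] at hmul
  have h3 : (1 + e * (-1 / x)) * x ^ e = x ^ e - e * x ^ (e - 1) := by
    rw [Real.rpow_sub hx0, Real.rpow_one]
    field_simp
    ring
  rwa [h3] at hmul

-- convex step: x^r - r x^(r-1) ≤ (x-1)^r, for x ≥ 1, r ≥ 1
lemma hl_step_ge {x r : ℝ} (hx : 1 ≤ x) (hr : 1 ≤ r) :
    x ^ r - r * x ^ (r - 1) ≤ (x - 1) ^ r := by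
  have hx0 : (0:ℝ) < x := lt_of_lt_of_le one_pos hx
  have h1x : 1 / x ≤ 1 := by rw [div_le_one hx0]; exact hx
  have hb : 1 + r * (-1 / x) ≤ (1 + (-1 / x)) ^ r :=
    one_add_mul_self_le_rpow_one_add (by rw [neg_div]; linarith) hr
  have hpos : (0:ℝ) ≤ 1 + (-1/x) := by rw [neg_div]; linarith
  have hmul := mul_le_mul_of_nonneg_right hb (Real.rpow_nonneg hx0.le r)
  rw [← Real.mul_rpow hpos hx0.le] at hmul
  have h2 : (1 + -1 / x) * x = x - 1 := by field_simp; ring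
  rw [h2] at hmul
  have h3 : (1 + r * (-1 / x)) * x ^ r = x ^ r - r * x ^ (r - 1) := by
    rw [Real.rpow_sub hx0, Real.rpow_one]
    field_simp
    ring
  rwa [h3] at hmul

-- negative exponent step: x^(-β) + β x^(-1-β) ≤ (x-1)^(-β), for x ≥ 2, β > 0
lemma hl_step_neg {x β : ℝ} (hx : 2 ≤ x) (hβ : 0 < β) :
    x ^ (-β) + β * x ^ (-1 - β) ≤ (x - 1) ^ (-β) := by
  have hx0 : (0:ℝ) < x := by linarith
  have hx1 : (0:ℝ) < x - 1 := by linarith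
  have hxβ : (0:ℝ) < x ^ (-β) := Real.rpow_pos_of_pos hx0 _
  have key : (1 + β / x) * x ^ (-β) ≤ (x - 1) ^ (-β) := by
    rcases le_or_gt 1 β with hβ1 | hβ1
    · have hb : 1 + β * (1 / (x - 1)) ≤ (1 + 1 / (x - 1)) ^ β :=
        one_add_mul_self_le_rpow_one_add (by
          have : (0:ℝ) < 1 / (x - 1) := by positivity
          linarith) hβ1
      have h2 : (1:ℝ) + 1 / (x - 1) = x / (x - 1) := by field_simp; ring
      have h3 : (x / (x - 1)) ^ β = x ^ β * (x - 1) ^ (-β) := by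
        rw [Real.div_rpow hx0.le hx1.le, Real.rpow_neg hx1.le, div_eq_mul_inv]
      have h4 : 1 + β / x ≤ 1 + β * (1 / (x - 1)) := by
        rw [mul_one_div]
        have : β / x ≤ β / (x - 1) := by gcongr; linarith
        linarith
      rw [h2, h3] at hb
      have hmul := mul_le_mul_of_nonneg_right (h4.trans hb) hxβ.le
      calc (1 + β / x) * x ^ (-β) ≤ x ^ β * (x - 1) ^ (-β) * x ^ (-β) := hmul
        _ = (x - 1) ^ (-β) := by
            rw [mul_comm (x ^ β), mul_assoc, ← Real.rpow_add hx0]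
            simp
    · have h1x : (-1:ℝ) ≤ -1 / x := by
        rw [neg_div, neg_le_neg_iff, div_le_one hx0]; linarith
      have hxhalf : 1 / x ≤ 1 / 2 := by
        apply one_div_le_one_div_of_le <;> linarith
      have hu : (0:ℝ) < 1 + (-1 / x) := by rw [neg_div]; linarith
      have hb : (1 + (-1 / x)) ^ β ≤ 1 + β * (-1 / x) :=
        rpow_one_add_le_one_add_mul_self h1x hβ.le hβ1.le
      have hv : (0:ℝ) < 1 + β * (-1 / x) := by
        have h : β * (1 / x) ≤ 1 * (1/2) :=
          mul_le_mul hβ1.le hxhalf (by positivity) (by norm_num)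
        have : β * (-1/x) = -(β * (1/x)) := by ring
        rw [this]; linarith
      have huβ : (0:ℝ) < (1 + (-1/x)) ^ β := Real.rpow_pos_of_pos hu _
      have hA : (1 + β / x) * (1 + β * (-1 / x)) ≤ 1 := by
        have h : β * (-1/x) = -(β/x) := by ring
        rw [h]
        nlinarith [sq_nonneg (β / x)]
      have h5 : 1 + β / x ≤ 1 / (1 + (-1/x)) ^ β := by
        have h6 : 1 + β / x ≤ 1 / (1 + β * (-1/x)) := by
          rw [le_div_iff₀ hv]; exact hA
        have h7 : 1 / (1 + β * (-1/x)) ≤ 1 / (1 + (-1/x)) ^ β :=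
          one_div_le_one_div_of_le huβ hb
        linarith
      calc (1 + β / x) * x ^ (-β) ≤ (1 / (1 + (-1/x)) ^ β) * x ^ (-β) :=
            mul_le_mul_of_nonneg_right h5 hxβ.le
        _ = (x - 1) ^ (-β) := by
            rw [show x - 1 = x * (1 + (-1/x)) by field_simp; ring]
            rw [Real.mul_rpow hx0.le hu.le, Real.rpow_neg hu.le]
            rw [one_div]
            ring
  have heq : x ^ (-β) + β * x ^ (-1 - β) = (1 + β / x) * x ^ (-β) := by
    rw [show -1 - β = -β - 1 by ring, Real.rpow_sub hx0, Real.rpow_one]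
    field_simp
  rw [heq]
  exact key

-- Lemma A: partial sums of k^(e-1) bounded by μ^e / e
lemma hl_sum_le {e : ℝ} (he0 : 0 < e) (he1 : e ≤ 1) (μ : ℕ) :
    ∑ ν ∈ Icc 1 μ, (ν : ℝ) ^ (e - 1) ≤ (μ : ℝ) ^ e / e := by
  induction μ with
  | zero => simp [Real.zero_rpow he0.ne']
  | succ m ih =>
    rw [Finset.sum_Icc_succ_top (by omega)]
    have hx : (1:ℝ) ≤ (m:ℝ) + 1 := by
      have : (0:ℝ) ≤ (m:ℝ) := Nat.cast_nonneg m
      linarith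
    have hstep := hl_step_le hx he0.le he1
    have hcast : ((m:ℝ) + 1) - 1 = (m:ℝ) := by ring
    rw [hcast] at hstep
    push_cast
    rw [le_div_iff₀ he0] at ih ⊢
    rw [add_mul]
    linarith

-- Lemma B: μ^r ≤ r * ∑_{ν=1}^μ ν^(r-1), for r ≥ 1
lemma hl_sum_ge {r : ℝ} (hr : 1 ≤ r) (μ : ℕ) :
    (μ : ℝ) ^ r ≤ r * ∑ ν ∈ Icc 1 μ, (ν : ℝ) ^ (r - 1) := by
  induction μ with
  | zero => simp [Real.zero_rpow (by positivity : r ≠ 0)]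
  | succ m ih =>
    rw [Finset.sum_Icc_succ_top (by omega)]
    have hx : (1:ℝ) ≤ (m:ℝ) + 1 := by
      have : (0:ℝ) ≤ (m:ℝ) := Nat.cast_nonneg m
      linarith
    have hstep := hl_step_ge hx hr
    have hcast : ((m:ℝ) + 1) - 1 = (m:ℝ) := by ring
    rw [hcast] at hstep
    push_cast
    rw [mul_add]
    linarith

-- tail bound
lemma hl_tail {β : ℝ} (hβ : 0 < β) {ν : ℕ} (hν : 1 ≤ ν) (n : ℕ) :
    ∑ μ ∈ Icc ν n, (μ : ℝ) ^ (-1 - β) ≤ (1 + 1 / β) * (ν : ℝ) ^ (-β) := by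
  have hν0 : (0:ℝ) < (ν:ℝ) := by exact_mod_cast hν
  have key : ∀ m : ℕ, ν ≤ m →
      ∑ μ ∈ Icc (ν + 1) m, (μ : ℝ) ^ (-1 - β) ≤ ((ν:ℝ) ^ (-β) - (m:ℝ) ^ (-β)) / β := by
    intro m hm
    induction m, hm using Nat.le_induction with
    | base => rw [Finset.Icc_eq_empty (by omega)]; simp
    | succ k hk ihk =>
      rw [Finset.sum_Icc_succ_top (by omega)]
      have hx : (2:ℝ) ≤ (k:ℝ) + 1 := by
        have : (1:ℝ) ≤ (k:ℝ) := by exact_mod_cast le_trans hν hk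
        linarith
      have hstep := hl_step_neg hx hβ
      have hcast : ((k:ℝ) + 1) - 1 = (k:ℝ) := by ring
      rw [hcast] at hstep
      push_cast
      rw [le_div_iff₀ hβ] at ihk ⊢
      rw [add_mul]
      linarith
  rcases lt_or_ge n ν with h | h
  · rw [Finset.Icc_eq_empty (by omega)]
    simp only [Finset.sum_empty]
    positivity
  · have hsplit : Icc ν n = insert ν (Icc (ν + 1) n) := by
      rw [Finset.Icc_add_one_left_eq_Ioc, Finset.Ioc_insert_left h]
    rw [hsplit, Finset.sum_insert (by simp [Finset.Icc_add_one_left_eq_Ioc])]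
    have h1 : (ν:ℝ) ^ (-1 - β) ≤ (ν:ℝ) ^ (-β) := by
      apply Real.rpow_le_rpow_of_exponent_le (by exact_mod_cast hν) (by linarith)
    have h2 := key n h
    have h3 : ((ν:ℝ) ^ (-β) - (n:ℝ) ^ (-β)) / β ≤ (ν:ℝ)^(-β) / β := by
      gcongr
      have : (0:ℝ) ≤ (n:ℝ)^(-β) := Real.rpow_nonneg (Nat.cast_nonneg n) _
      linarith
    have : (1 + 1/β) * (ν:ℝ)^(-β) = (ν:ℝ)^(-β) + (ν:ℝ)^(-β)/β := by ring
    rw [this]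
    linarith

-- Jensen / power mean inequality with general nonneg weights
lemma hl_jensen {p : ℝ} (hp : 1 ≤ p) (s : Finset ℕ) (w x : ℕ → ℝ)
    (hw : ∀ i ∈ s, 0 ≤ w i) (hx : ∀ i ∈ s, 0 ≤ x i) (hW : 0 < ∑ i ∈ s, w i) :
    (∑ i ∈ s, w i * x i) ^ p ≤ (∑ i ∈ s, w i) ^ (p - 1) * ∑ i ∈ s, w i * x i ^ p := by
  set W := ∑ i ∈ s, w i with hWdef
  have hsum1 : ∑ i ∈ s, w i / W = 1 := by
    rw [← Finset.sum_div, div_self hW.ne']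
  have h := Real.rpow_arith_mean_le_arith_mean_rpow s (fun i => w i / W) x
    (fun i hi => div_nonneg (hw i hi) hW.le) hsum1 hx hp
  have hL : ∑ i ∈ s, w i / W * x i = (∑ i ∈ s, w i * x i) / W := by
    rw [Finset.sum_div]
    exact Finset.sum_congr rfl fun i _ => by ring
  have hR : ∑ i ∈ s, w i / W * x i ^ p = (∑ i ∈ s, w i * x i ^ p) / W := by
    rw [Finset.sum_div]
    exact Finset.sum_congr rfl fun i _ => by ring
  rw [hL, hR] at h
  have hnum : 0 ≤ ∑ i ∈ s, w i * x i :=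
    Finset.sum_nonneg fun i hi => mul_nonneg (hw i hi) (hx i hi)
  rw [Real.div_rpow hnum hW.le] at h
  have hWp : (0:ℝ) < W ^ p := Real.rpow_pos_of_pos hW _
  rw [div_le_div_iff₀ hWp hW] at h
  calc (∑ i ∈ s, w i * x i) ^ p = ((∑ i ∈ s, w i * x i) ^ p * W) / W := by
        field_simp
    _ ≤ ((∑ i ∈ s, w i * x i ^ p) * W ^ p) / W := by gcongr
    _ = W ^ (p - 1) * ∑ i ∈ s, w i * x i ^ p := by
        rw [Real.rpow_sub hW, Real.rpow_one]
        field_simp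

end aux

theorem stmt_15 (α lam p : ℝ) (hα : 0 < α) (hp : 1 ≤ p) :
    ∃ C₁ C₂ : ℝ, 0 < C₁ ∧ 0 < C₂ ∧ ∀ a : ℕ → ℝ, (∀ ν, 0 ≤ a ν) → (∀ ν, a (ν + 1) ≤ a ν) →
      ∀ n : ℕ, 1 ≤ n →
        C₁ * ∑ μ ∈ Icc 1 n, (μ : ℝ) ^ (-α - 1) * (a μ * (μ : ℝ) ^ (lam + 1)) ^ p ≤
          ∑ μ ∈ Icc 1 n, (μ : ℝ) ^ (-α - 1) * (∑ ν ∈ Icc 1 μ, a ν * (ν : ℝ) ^ lam) ^ p ∧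
        ∑ μ ∈ Icc 1 n, (μ : ℝ) ^ (-α - 1) * (∑ ν ∈ Icc 1 μ, a ν * (ν : ℝ) ^ lam) ^ p ≤
          C₂ * ∑ μ ∈ Icc 1 n, (μ : ℝ) ^ (-α - 1) * (a μ * (μ : ℝ) ^ (lam + 1)) ^ p := by
  have hp0 : (0:ℝ) < p := lt_of_lt_of_le one_pos hp
  obtain ⟨e, hedef⟩ : ∃ e : ℝ, e = min 1 (α / (2 * p)) := ⟨_, rfl⟩
  have he0 : 0 < e := by rw [hedef]; exact lt_min one_pos (by positivity)
  have he1 : e ≤ 1 := by rw [hedef]; exact min_le_left _ _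
  have heα : e * (p - 1) < α := by
    have h1 : e ≤ α / (2 * p) := by rw [hedef]; exact min_le_right _ _
    have h2 : e * (p - 1) ≤ (α / (2 * p)) * p := by
      apply mul_le_mul h1 (by linarith) (by linarith) (by positivity)
    have h3 : (α / (2 * p)) * p = α / 2 := by field_simp
    linarith
  obtain ⟨β, hβdef⟩ : ∃ β : ℝ, β = α - e * (p - 1) := ⟨_, rfl⟩
  have hβ : 0 < β := by rw [hβdef]; linarith
  obtain ⟨γ, hγdef⟩ : ∃ γ : ℝ, γ = lam * p + (1 - e) * p + (e - 1) := ⟨_, rfl⟩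
  obtain ⟨c, hcdef⟩ : ∃ c : ℝ, c = 1 / (1 + |lam|) := ⟨_, rfl⟩
  have habs : (0:ℝ) ≤ |lam| := abs_nonneg lam
  have hc0 : 0 < c := by rw [hcdef]; positivity
  have hc1 : c ≤ 1 := by rw [hcdef, div_le_one (by positivity)]; linarith
  refine ⟨c ^ p, e ^ (1 - p) * (1 + 1 / β), Real.rpow_pos_of_pos hc0 p,
    mul_pos (Real.rpow_pos_of_pos he0 _) (by positivity), ?_⟩
  intro a ha hmono n hn
  have hanti : Antitone a := antitone_nat_of_succ_le hmono
  constructor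
  · -- lower bound
    rw [Finset.mul_sum]
    apply Finset.sum_le_sum
    intro μ hμ
    rw [mem_Icc] at hμ
    have hμR : (1:ℝ) ≤ (μ:ℝ) := by exact_mod_cast hμ.1
    have hμ0 : (0:ℝ) < (μ:ℝ) := by linarith
    have hsum : c * (μ:ℝ) ^ (lam + 1) ≤ ∑ ν ∈ Icc 1 μ, (ν:ℝ) ^ lam := by
      rcases le_or_gt lam 0 with hl | hl
      · have hkey : (μ:ℝ) * (μ:ℝ) ^ lam ≤ ∑ ν ∈ Icc 1 μ, (ν:ℝ) ^ lam := by
          calc (μ:ℝ) * (μ:ℝ) ^ lam = ∑ _ν ∈ Icc 1 μ, (μ:ℝ) ^ lam := by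
                rw [Finset.sum_const, Nat.card_Icc, nsmul_eq_mul]
                simp
            _ ≤ ∑ ν ∈ Icc 1 μ, (ν:ℝ) ^ lam := by
                apply Finset.sum_le_sum
                intro ν hν
                rw [mem_Icc] at hν
                have hν0 : (0:ℝ) < (ν:ℝ) := by exact_mod_cast hν.1
                exact Real.rpow_le_rpow_of_nonpos hν0 (by exact_mod_cast hν.2) hl
        have hμl : (μ:ℝ) ^ (lam + 1) = (μ:ℝ) * (μ:ℝ) ^ lam := by
          rw [Real.rpow_add hμ0, Real.rpow_one]; ring
        have hXn : (0:ℝ) ≤ (μ:ℝ) ^ (lam + 1) := Real.rpow_nonneg hμ0.le _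
        nlinarith [hXn]
      · have hkey := hl_sum_ge (r := lam + 1) (by linarith) μ
        simp only [add_sub_cancel_right] at hkey
        rw [hcdef, abs_of_pos hl, div_mul_eq_mul_div, div_le_iff₀ (by linarith)]
        nlinarith [hkey]
    have hterm : c ^ p * (a μ * (μ:ℝ) ^ (lam + 1)) ^ p ≤
        (∑ ν ∈ Icc 1 μ, a ν * (ν:ℝ) ^ lam) ^ p := by
      rw [← Real.mul_rpow hc0.le (mul_nonneg (ha μ) (Real.rpow_nonneg hμ0.le _))]
      apply Real.rpow_le_rpow
        (mul_nonneg hc0.le (mul_nonneg (ha μ) (Real.rpow_nonneg hμ0.le _))) ?_ (by linarith)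
      calc c * (a μ * (μ:ℝ) ^ (lam + 1)) = a μ * (c * (μ:ℝ) ^ (lam + 1)) := by ring
        _ ≤ a μ * ∑ ν ∈ Icc 1 μ, (ν:ℝ) ^ lam := mul_le_mul_of_nonneg_left hsum (ha μ)
        _ = ∑ ν ∈ Icc 1 μ, a μ * (ν:ℝ) ^ lam := by rw [Finset.mul_sum]
        _ ≤ ∑ ν ∈ Icc 1 μ, a ν * (ν:ℝ) ^ lam := by
            apply Finset.sum_le_sum
            intro ν hν
            rw [mem_Icc] at hν
            exact mul_le_mul_of_nonneg_right (hanti hν.2)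
              (Real.rpow_nonneg (Nat.cast_nonneg ν) _)
    calc c ^ p * ((μ:ℝ) ^ (-α - 1) * (a μ * (μ:ℝ) ^ (lam + 1)) ^ p)
        = (μ:ℝ) ^ (-α - 1) * (c ^ p * (a μ * (μ:ℝ) ^ (lam + 1)) ^ p) := by ring
      _ ≤ (μ:ℝ) ^ (-α - 1) * (∑ ν ∈ Icc 1 μ, a ν * (ν:ℝ) ^ lam) ^ p :=
          mul_le_mul_of_nonneg_left hterm (Real.rpow_nonneg hμ0.le _)
  · -- upper bound
    have hstep : ∀ μ ∈ Icc 1 n, (μ:ℝ) ^ (-α - 1) * (∑ ν ∈ Icc 1 μ, a ν * (ν:ℝ) ^ lam) ^ p ≤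
        e ^ (1 - p) * ∑ ν ∈ Icc 1 μ, (μ:ℝ) ^ (-1 - β) * (a ν ^ p * (ν:ℝ) ^ γ) := by
      intro μ hμ
      rw [mem_Icc] at hμ
      have hμR : (1:ℝ) ≤ (μ:ℝ) := by exact_mod_cast hμ.1
      have hμ0 : (0:ℝ) < (μ:ℝ) := by linarith
      have hne : (Icc 1 μ).Nonempty := ⟨1, by rw [mem_Icc]; omega⟩
      have hjen := hl_jensen hp (Icc 1 μ) (fun ν => (ν:ℝ) ^ (e - 1))
        (fun ν => a ν * (ν:ℝ) ^ lam * (ν:ℝ) ^ (1 - e))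
        (fun ν _ => Real.rpow_nonneg (Nat.cast_nonneg ν) _)
        (fun ν _ => mul_nonneg (mul_nonneg (ha ν) (Real.rpow_nonneg (Nat.cast_nonneg ν) _))
          (Real.rpow_nonneg (Nat.cast_nonneg ν) _))
        (Finset.sum_pos (fun ν hν => Real.rpow_pos_of_pos
          (by rw [mem_Icc] at hν; exact_mod_cast Nat.lt_of_lt_of_le Nat.zero_lt_one hν.1) _) hne)
      have hid1 : ∑ ν ∈ Icc 1 μ, (ν:ℝ) ^ (e - 1) * (a ν * (ν:ℝ) ^ lam * (ν:ℝ) ^ (1 - e))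
          = ∑ ν ∈ Icc 1 μ, a ν * (ν:ℝ) ^ lam := by
        apply Finset.sum_congr rfl
        intro ν hν
        rw [mem_Icc] at hν
        have hν0 : (0:ℝ) < (ν:ℝ) := by exact_mod_cast hν.1
        have hone : (ν:ℝ) ^ (e - 1) * (ν:ℝ) ^ (1 - e) = 1 := by
          rw [← Real.rpow_add hν0]; norm_num
        calc (ν:ℝ) ^ (e - 1) * (a ν * (ν:ℝ) ^ lam * (ν:ℝ) ^ (1 - e))
            = a ν * (ν:ℝ) ^ lam * ((ν:ℝ) ^ (e - 1) * (ν:ℝ) ^ (1 - e)) := by ring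
          _ = a ν * (ν:ℝ) ^ lam := by rw [hone, mul_one]
      have hid2 : ∑ ν ∈ Icc 1 μ, (ν:ℝ) ^ (e - 1) * (a ν * (ν:ℝ) ^ lam * (ν:ℝ) ^ (1 - e)) ^ p
          = ∑ ν ∈ Icc 1 μ, a ν ^ p * (ν:ℝ) ^ γ := by
        apply Finset.sum_congr rfl
        intro ν hν
        rw [mem_Icc] at hν
        have hν0 : (0:ℝ) < (ν:ℝ) := by exact_mod_cast hν.1
        rw [Real.mul_rpow (mul_nonneg (ha ν) (Real.rpow_nonneg hν0.le _))
            (Real.rpow_nonneg hν0.le _),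
          Real.mul_rpow (ha ν) (Real.rpow_nonneg hν0.le _),
          ← Real.rpow_mul hν0.le, ← Real.rpow_mul hν0.le]
        calc (ν:ℝ) ^ (e - 1) * (a ν ^ p * (ν:ℝ) ^ (lam * p) * (ν:ℝ) ^ ((1 - e) * p))
            = a ν ^ p * ((ν:ℝ) ^ (lam * p) * ((ν:ℝ) ^ ((1 - e) * p) * (ν:ℝ) ^ (e - 1))) := by
              ring
          _ = a ν ^ p * (ν:ℝ) ^ γ := by
              rw [← Real.rpow_add hν0, ← Real.rpow_add hν0, hγdef]
              congr 2
              ring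
      rw [hid1, hid2] at hjen
      have hWn : (0:ℝ) ≤ ∑ ν ∈ Icc 1 μ, (ν:ℝ) ^ (e - 1) :=
        Finset.sum_nonneg fun ν _ => Real.rpow_nonneg (Nat.cast_nonneg ν) _
      have hWle : (∑ ν ∈ Icc 1 μ, (ν:ℝ) ^ (e - 1)) ^ (p - 1) ≤ ((μ:ℝ) ^ e / e) ^ (p - 1) :=
        Real.rpow_le_rpow hWn (hl_sum_le he0 he1 μ) (by linarith)
      have hpow : ((μ:ℝ) ^ e / e) ^ (p - 1) = (μ:ℝ) ^ (e * (p - 1)) * e ^ (1 - p) := by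
        rw [Real.div_rpow (Real.rpow_nonneg hμ0.le e) he0.le, ← Real.rpow_mul hμ0.le,
          show (1 - p) = -(p - 1) by ring, Real.rpow_neg he0.le, div_eq_mul_inv]
      have hTn : (0:ℝ) ≤ ∑ ν ∈ Icc 1 μ, a ν ^ p * (ν:ℝ) ^ γ :=
        Finset.sum_nonneg fun ν _ => mul_nonneg (Real.rpow_nonneg (ha ν) p)
          (Real.rpow_nonneg (Nat.cast_nonneg ν) γ)
      have hcomb : (μ:ℝ) ^ (-α - 1) * (μ:ℝ) ^ (e * (p - 1)) = (μ:ℝ) ^ (-1 - β) := by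
        rw [← Real.rpow_add hμ0, hβdef]
        congr 1
        ring
      calc (μ:ℝ) ^ (-α - 1) * (∑ ν ∈ Icc 1 μ, a ν * (ν:ℝ) ^ lam) ^ p
          ≤ (μ:ℝ) ^ (-α - 1) * ((∑ ν ∈ Icc 1 μ, (ν:ℝ) ^ (e - 1)) ^ (p - 1) *
              ∑ ν ∈ Icc 1 μ, a ν ^ p * (ν:ℝ) ^ γ) :=
            mul_le_mul_of_nonneg_left hjen (Real.rpow_nonneg hμ0.le _)
        _ ≤ (μ:ℝ) ^ (-α - 1) * (((μ:ℝ) ^ e / e) ^ (p - 1) *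
              ∑ ν ∈ Icc 1 μ, a ν ^ p * (ν:ℝ) ^ γ) := by
            apply mul_le_mul_of_nonneg_left (mul_le_mul_of_nonneg_right hWle hTn)
              (Real.rpow_nonneg hμ0.le _)
        _ = e ^ (1 - p) * (((μ:ℝ) ^ (-α - 1) * (μ:ℝ) ^ (e * (p - 1))) *
              ∑ ν ∈ Icc 1 μ, a ν ^ p * (ν:ℝ) ^ γ) := by
            rw [hpow]; ring
        _ = e ^ (1 - p) * ∑ ν ∈ Icc 1 μ, (μ:ℝ) ^ (-1 - β) * (a ν ^ p * (ν:ℝ) ^ γ) := by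
            rw [hcomb, Finset.mul_sum]
    have hswap : ∑ μ ∈ Icc 1 n, ∑ ν ∈ Icc 1 μ, (μ:ℝ) ^ (-1 - β) * (a ν ^ p * (ν:ℝ) ^ γ) =
        ∑ ν ∈ Icc 1 n, ∑ μ ∈ Icc ν n, (μ:ℝ) ^ (-1 - β) * (a ν ^ p * (ν:ℝ) ^ γ) :=
      Finset.sum_comm' (by intro x y; simp only [mem_Icc]; omega)
    have hfin : ∀ ν ∈ Icc 1 n,
        a ν ^ p * (ν:ℝ) ^ γ * (ν:ℝ) ^ (-β) =
        (ν:ℝ) ^ (-α - 1) * (a ν * (ν:ℝ) ^ (lam + 1)) ^ p := by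
      intro ν hν
      rw [mem_Icc] at hν
      have hν0 : (0:ℝ) < (ν:ℝ) := by exact_mod_cast hν.1
      have hL : a ν ^ p * (ν:ℝ) ^ γ * (ν:ℝ) ^ (-β) = a ν ^ p * (ν:ℝ) ^ (γ + -β) := by
        rw [Real.rpow_add hν0]; ring
      have hR : (ν:ℝ) ^ (-α - 1) * (a ν * (ν:ℝ) ^ (lam + 1)) ^ p =
          a ν ^ p * (ν:ℝ) ^ ((lam + 1) * p + (-α - 1)) := by
        rw [Real.mul_rpow (ha ν) (Real.rpow_nonneg hν0.le _), ← Real.rpow_mul hν0.le,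
          Real.rpow_add hν0]
        ring
      rw [hL, hR, show γ + -β = (lam + 1) * p + (-α - 1) by rw [hγdef, hβdef]; ring]
    calc ∑ μ ∈ Icc 1 n, (μ:ℝ) ^ (-α - 1) * (∑ ν ∈ Icc 1 μ, a ν * (ν:ℝ) ^ lam) ^ p
        ≤ ∑ μ ∈ Icc 1 n, e ^ (1 - p) *
            ∑ ν ∈ Icc 1 μ, (μ:ℝ) ^ (-1 - β) * (a ν ^ p * (ν:ℝ) ^ γ) :=
          Finset.sum_le_sum hstep
      _ = e ^ (1 - p) * ∑ μ ∈ Icc 1 n, ∑ ν ∈ Icc 1 μ, (μ:ℝ) ^ (-1 - β) *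
            (a ν ^ p * (ν:ℝ) ^ γ) := by rw [← Finset.mul_sum]
      _ = e ^ (1 - p) * ∑ ν ∈ Icc 1 n, ∑ μ ∈ Icc ν n, (μ:ℝ) ^ (-1 - β) *
            (a ν ^ p * (ν:ℝ) ^ γ) := by rw [hswap]
      _ = e ^ (1 - p) * ∑ ν ∈ Icc 1 n, (a ν ^ p * (ν:ℝ) ^ γ) *
            ∑ μ ∈ Icc ν n, (μ:ℝ) ^ (-1 - β) := by
          congr 1
          apply Finset.sum_congr rfl
          intro ν _
          rw [Finset.mul_sum]
          apply Finset.sum_congr rfl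
          intro μ _
          ring
      _ ≤ e ^ (1 - p) * ∑ ν ∈ Icc 1 n, (a ν ^ p * (ν:ℝ) ^ γ) *
            ((1 + 1 / β) * (ν:ℝ) ^ (-β)) := by
          apply mul_le_mul_of_nonneg_left ?_ (Real.rpow_nonneg he0.le _)
          apply Finset.sum_le_sum
          intro ν hν
          rw [mem_Icc] at hν
          exact mul_le_mul_of_nonneg_left (hl_tail hβ hν.1 n)
            (mul_nonneg (Real.rpow_nonneg (ha ν) p) (Real.rpow_nonneg (Nat.cast_nonneg ν) γ))
      _ = e ^ (1 - p) * (1 + 1 / β) *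
            ∑ ν ∈ Icc 1 n, (ν:ℝ) ^ (-α - 1) * (a ν * (ν:ℝ) ^ (lam + 1)) ^ p := by
          rw [Finset.mul_sum, mul_assoc, Finset.mul_sum, Finset.mul_sum]
          apply Finset.sum_congr rfl
          intro ν hν
          rw [← hfin ν hν]
          ring
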